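/- Let 1 ≤ j ≤ n−2, let K be a convex body in ℝ^n, let L = e_n^⊥, and let B_L^{n−1} be the unit ball of L. For z ∈ S^{n−1}∖{±e_n}, the vector z is (K[j], B_L^{n−1}[n−1−j])-extreme if and only if dim TS(K,z) ≥ j and TS(K,z) ⊄ L. For z ∈ {±e_n}, z is (K[j], B_L^{n−1}[n−1−j])-extreme if and only if dim TS(K,z) ≥ j. -/

import Mathlib

open Metric MeasureTheory Set
open scoped InnerProductSpace RealInnerProductSpace ENNReal Pointwise NNReal Classical

noncomputable section

/-- Support function of a convex body. -/
def supportFn {n : ℕ} (K : ConvexBody (EuclideanSpace ℝ (Fin n)))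
    (u : EuclideanSpace ℝ (Fin n)) : ℝ :=
  sSup ((fun y => ⟪u, y⟫_ℝ) '' (K : Set (EuclideanSpace ℝ (Fin n))))

/-- Subdifferential of a real-valued function. -/
def subdiff {W : Type*} [NormedAddCommGroup W] [InnerProductSpace ℝ W]
    (w : W → ℝ) (x : W) : Set W :=
  {y | ∀ z, w x + ⟪y, z - x⟫_ℝ ≤ w z}

/-- Monge–Ampère measure (as a set function) of a finite-valued convex function. -/
def MAfn {n : ℕ} (v : EuclideanSpace ℝ (Fin n) → ℝ) (B : Set (EuclideanSpace ℝ (Fin n))) : ℝ≥0∞ :=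
  volume (⋃ b ∈ B, subdiff v b)

/-- The Euclidean unit ball as a convex body. -/
def unitBody (n : ℕ) : ConvexBody (EuclideanSpace ℝ (Fin n)) :=
  ⟨closedBall 0 1, convex_closedBall 0 1, isCompact_closedBall 0 1,
    Metric.nonempty_closedBall.mpr zero_le_one⟩

/-- κ_i, the volume of the i-dimensional unit ball. -/
def kappa (i : ℕ) : ℝ := (volume (closedBall (0 : EuclideanSpace ℝ (Fin i)) 1)).toReal

/-- segment from origin to a point, as a convex body -/
def segBody {n : ℕ} (e : EuclideanSpace ℝ (Fin n)) : ConvexBody (EuclideanSpace ℝ (Fin n)) :=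
  ⟨segment ℝ 0 e, convex_segment 0 e, by
      rw [segment_eq_image ℝ 0 e]
      exact (isCompact_Icc).image (by fun_prop),
    ⟨0, left_mem_segment ℝ 0 e⟩⟩

/-- convex indicator function, with values in EReal -/
def indicatorE {W : Type*} [Zero W] (s : Set W) : W → EReal := fun x => if x ∈ s then (0 : EReal) else ⊤

/-- infimal convolution -/
def infConv {W : Type*} [AddGroup W] (u v : W → EReal) : W → EReal :=
  fun x => ⨅ y, u (x - y) + v y

/-- epi-multiplication -/
def epiMul {W : Type*} [AddCommGroup W] [Module ℝ W] (lam : ℝ) (u : W → EReal) : W → EReal :=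
  if lam = 0 then indicatorE {0} else fun x => (lam : EReal) * u (lam⁻¹ • x)

/-- Legendre--Fenchel conjugate -/
def conj {W : Type*} [NormedAddCommGroup W] [InnerProductSpace ℝ W] (u : W → EReal) : W → EReal :=
  fun x => ⨆ y, ((⟪x, y⟫_ℝ : ℝ) : EReal) - u y

/-- an EReal-valued function is proper -/
def ProperE {W : Type*} (u : W → EReal) : Prop := (∀ x, u x ≠ ⊥) ∧ ∃ x, u x ≠ ⊤

/-- convexity via the epigraph -/
def ConvexE {W : Type*} [AddCommGroup W] [Module ℝ W] (u : W → EReal) : Prop :=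
  Convex ℝ {p : W × ℝ | u p.1 ≤ (p.2 : EReal)}

/-- super-coercive -/
def SuperCoercive {W : Type*} [NormedAddCommGroup W] (u : W → EReal) : Prop :=
  ∀ c : ℝ, ∃ R : ℝ, ∀ x, R ≤ ‖x‖ → ((c * ‖x‖ : ℝ) : EReal) ≤ u x


/-- The support set `F(K,z) = {x ∈ K : ⟨x,z⟩ = h_K(z)}`. -/
def suppSet {n : ℕ} (K : ConvexBody (EuclideanSpace ℝ (Fin n)))
    (z : EuclideanSpace ℝ (Fin n)) : Set (EuclideanSpace ℝ (Fin n)) :=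
  {x | x ∈ (K : Set (EuclideanSpace ℝ (Fin n))) ∧ ⟪x, z⟫_ℝ = supportFn K z}

/-- The normal cone of `K` at a point `x`. -/
def normalConeAt {n : ℕ} (K : ConvexBody (EuclideanSpace ℝ (Fin n)))
    (x : EuclideanSpace ℝ (Fin n)) : Set (EuclideanSpace ℝ (Fin n)) :=
  {z | ∀ y ∈ (K : Set (EuclideanSpace ℝ (Fin n))), ⟪z, y⟫_ℝ ≤ ⟪z, x⟫_ℝ}

/-- The normal cone `N(K,F)` of `K` at a face `F` (i.e. the normal cone at the relative
interior points of `F`). -/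
def normalConeFace {n : ℕ} (K : ConvexBody (EuclideanSpace ℝ (Fin n)))
    (F : Set (EuclideanSpace ℝ (Fin n))) : Set (EuclideanSpace ℝ (Fin n)) :=
  {z | ∀ x ∈ intrinsicInterior ℝ F, z ∈ normalConeAt K x}

/-- `T` is the touching cone of `K` at `z`: a face (extreme subset) of the normal cone
`N(K, F(K,z))` containing `z` in its relative interior. -/
def IsTouchingCone {n : ℕ} (K : ConvexBody (EuclideanSpace ℝ (Fin n)))
    (z : EuclideanSpace ℝ (Fin n)) (T : Set (EuclideanSpace ℝ (Fin n))) : Prop :=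
  IsExtreme ℝ (normalConeFace K (suppSet K z)) T ∧ z ∈ intrinsicInterior ℝ T

/-- The touching space `TS(K,z) = T(K,z)^⊥`, the orthogonal complement of the touching cone. -/
def TSset {n : ℕ} (K : ConvexBody (EuclideanSpace ℝ (Fin n)))
    (z : EuclideanSpace ℝ (Fin n)) : Set (EuclideanSpace ℝ (Fin n)) :=
  {w | ∃ T, IsTouchingCone K z T ∧ ∀ v ∈ T, ⟪v, w⟫_ℝ = 0}

/-- The dimension of the touching space. -/
def dimTS {n : ℕ} (K : ConvexBody (EuclideanSpace ℝ (Fin n)))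
    (z : EuclideanSpace ℝ (Fin n)) : ℕ :=
  Module.finrank ℝ (Submodule.span ℝ (TSset K z))

/-- The `(n-1)`-dimensional unit ball sitting inside the subspace `L`, as a convex body. -/
def ballIn {n : ℕ} (L : Submodule ℝ (EuclideanSpace ℝ (Fin n))) :
    ConvexBody (EuclideanSpace ℝ (Fin n)) :=
  ⟨closedBall 0 1 ∩ (L : Set (EuclideanSpace ℝ (Fin n))),
    (convex_closedBall 0 1).inter L.convex,
    (isCompact_closedBall 0 1).inter_right
      (Submodule.closed_of_finiteDimensional L),
    ⟨0, by simp⟩⟩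

/-- The positive hull of a single vector. -/
def pos1 {n : ℕ} (a : EuclideanSpace ℝ (Fin n)) : Set (EuclideanSpace ℝ (Fin n)) :=
  {x | ∃ t : ℝ, 0 ≤ t ∧ x = t • a}

/-- The positive hull of three vectors. -/
def pos3 {n : ℕ} (a b c : EuclideanSpace ℝ (Fin n)) : Set (EuclideanSpace ℝ (Fin n)) :=
  {x | ∃ t₁ t₂ t₃ : ℝ, 0 ≤ t₁ ∧ 0 ≤ t₂ ∧ 0 ≤ t₃ ∧ x = t₁ • a + t₂ • b + t₃ • c}

/-- the "vertical" unit coordinate vector `eₙ` -/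
def lastVec (n : ℕ) (hn : 1 ≤ n) : EuclideanSpace ℝ (Fin n) :=
  EuclideanSpace.single (⟨n - 1, by omega⟩ : Fin n) (1 : ℝ)

/-- `z` is `(C 0, …, C (m-1))`-extreme: there are unit vectors `w i ∈ TS(C i, z)` which are
linearly independent. -/
def IsExtremeNormal {n m : ℕ} (C : Fin m → ConvexBody (EuclideanSpace ℝ (Fin n)))
    (z : EuclideanSpace ℝ (Fin n)) : Prop :=
  ∃ w : Fin m → EuclideanSpace ℝ (Fin n),
    (∀ i, ‖w i‖ = 1 ∧ w i ∈ TSset (C i) z) ∧ LinearIndependent ℝ w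


set_option maxHeartbeats 1000000

section AuxHelpers

set_option linter.unusedSectionVars false

variable {F : Type*} [NormedAddCommGroup F] [InnerProductSpace ℝ F] [FiniteDimensional ℝ F]

/-- push past: relative interior points can be pushed past any point of the set. -/
lemma aux_exists_openSegment {s : Set F} {x₀ y : F}
    (hx : x₀ ∈ intrinsicInterior ℝ s) (hy : y ∈ s) :
    ∃ p ∈ s, x₀ ∈ openSegment ℝ y p := by
  obtain ⟨x', hx', hxe⟩ := mem_intrinsicInterior.1 hx
  have hymem : y ∈ affineSpan ℝ s := subset_affineSpan ℝ s hy
  have hx₀mem : x₀ ∈ affineSpan ℝ s := hxe ▸ x'.2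
  have hmem : ∀ t : ℝ, t • (x₀ - y) + x₀ ∈ affineSpan ℝ s := by
    intro t
    exact AffineSubspace.smul_vsub_vadd_mem _ t hx₀mem hymem hx₀mem
  set c : ℝ → (affineSpan ℝ s) := fun t => ⟨t • (x₀ - y) + x₀, hmem t⟩ with hc
  have hcont : Continuous c := by
    apply Continuous.subtype_mk
    fun_prop
  have hc0 : c 0 = x' := by
    apply Subtype.ext
    simp [hc, hxe]
  have hopen : IsOpen (c ⁻¹' interior (((↑) : affineSpan ℝ s → F) ⁻¹' s)) :=
    isOpen_interior.preimage hcont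
  have h0 : (0 : ℝ) ∈ c ⁻¹' interior (((↑) : affineSpan ℝ s → F) ⁻¹' s) := by
    simp [hc0, hx']
  obtain ⟨ε, hε, hball⟩ := Metric.isOpen_iff.1 hopen 0 h0
  set t := ε / 2 with ht
  have htpos : 0 < t := by positivity
  have htmem : t ∈ c ⁻¹' interior (((↑) : affineSpan ℝ s → F) ⁻¹' s) := by
    apply hball
    rw [mem_ball, dist_zero_right, Real.norm_eq_abs, abs_of_pos htpos]
    linarith
  have hps : t • (x₀ - y) + x₀ ∈ s := by
    have : c t ∈ Subtype.val ⁻¹' s := interior_subset htmem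
    exact this
  refine ⟨t • (x₀ - y) + x₀, hps, ?_⟩
  refine ⟨t / (1 + t), 1 / (1 + t), by positivity, by positivity, ?_, ?_⟩
  · field_simp
    ring
  · have h1t : (1 : ℝ) + t ≠ 0 := by positivity
    match_scalars <;> (field_simp; try ring)

lemma aux_mem_intrinsicInterior_of_open {s O : Set F} (hO : IsOpen O)
    (hsub : O ∩ (affineSpan ℝ s : Set F) ⊆ s) {z : F} (hzO : z ∈ O)
    (hzA : z ∈ affineSpan ℝ s) : z ∈ intrinsicInterior ℝ s := by
  refine mem_intrinsicInterior.2 ⟨⟨z, hzA⟩, ?_, rfl⟩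
  have hOopen : IsOpen (((↑) : affineSpan ℝ s → F) ⁻¹' O) :=
    hO.preimage continuous_subtype_val
  have hsub2 : (((↑) : affineSpan ℝ s → F) ⁻¹' O) ⊆ ((↑) : affineSpan ℝ s → F) ⁻¹' s :=
    fun y hy => hsub ⟨hy, y.2⟩
  exact interior_maximal hsub2 hOopen hzO

lemma aux_isExtreme_eq {C T : Set F} {z : F} (hT : IsExtreme ℝ C T) (hz : z ∈ T)
    (hint : ∀ p ∈ C, ∃ q ∈ C, z ∈ openSegment ℝ p q) : T = C := by
  refine Set.Subset.antisymm hT.1 fun p hp => ?_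
  obtain ⟨q, hq, hseg⟩ := hint p hp
  exact hT.2 hp hq hz hseg

lemma aux_smul_mem_openSegment (x : F) {z : F} {ε : ℝ} (hε : 0 < ε) :
    z ∈ openSegment ℝ x ((1 + ε) • z - ε • x) := by
  have h1t : (1 : ℝ) + ε ≠ 0 := by positivity
  refine ⟨ε / (1 + ε), 1 / (1 + ε), by positivity, by positivity, ?_, ?_⟩
  · field_simp
    ring
  · match_scalars <;> (field_simp; try ring)

end AuxHelpers

section TSHelpers

set_option linter.unusedSectionVars false

variable {n : ℕ}

lemma aux_tsset_smul {K : ConvexBody (EuclideanSpace ℝ (Fin n))} {z w : EuclideanSpace ℝ (Fin n)}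
    (c : ℝ) (h : w ∈ TSset K z) : c • w ∈ TSset K z := by
  obtain ⟨T, hT, hperp⟩ := h
  exact ⟨T, hT, fun v hv => by rw [real_inner_smul_right, hperp v hv, mul_zero]⟩

lemma aux_tsset_inner {K : ConvexBody (EuclideanSpace ℝ (Fin n))} {z w : EuclideanSpace ℝ (Fin n)}
    (h : w ∈ TSset K z) : ⟪z, w⟫_ℝ = 0 := by
  obtain ⟨T, hT, hperp⟩ := h
  exact hperp z (intrinsicInterior_subset hT.2)

variable {e : EuclideanSpace ℝ (Fin n)}

lemma aux_mem_ballIn_iff (x : EuclideanSpace ℝ (Fin n)) :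
    x ∈ (ballIn (Submodule.span ℝ {e})ᗮ : Set (EuclideanSpace ℝ (Fin n))) ↔
      ‖x‖ ≤ 1 ∧ ⟪e, x⟫_ℝ = 0 := by
  have h : x ∈ (ballIn (Submodule.span ℝ {e})ᗮ : Set (EuclideanSpace ℝ (Fin n))) ↔
      x ∈ closedBall (0 : EuclideanSpace ℝ (Fin n)) 1 ∩
        ((Submodule.span ℝ {e})ᗮ : Set (EuclideanSpace ℝ (Fin n))) := by
    exact Iff.rfl
  rw [h, Set.mem_inter_iff, mem_closedBall_zero_iff]
  exact and_congr_right fun _ => Submodule.mem_orthogonal_singleton_iff_inner_right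


lemma aux_suppSet_vertical (he : ‖e‖ = 1) {z : EuclideanSpace ℝ (Fin n)}
    (hz : z = e ∨ z = -e) :
    suppSet (ballIn (Submodule.span ℝ {e})ᗮ) z
      = (ballIn (Submodule.span ℝ {e})ᗮ : Set (EuclideanSpace ℝ (Fin n))) := by
  set B := ballIn (Submodule.span ℝ {e})ᗮ with hB
  have h0B : (0 : EuclideanSpace ℝ (Fin n)) ∈ (B : Set (EuclideanSpace ℝ (Fin n))) := by
    rw [aux_mem_ballIn_iff]; simp
  have hver : ∀ y ∈ (B : Set (EuclideanSpace ℝ (Fin n))), ⟪z, y⟫_ℝ = 0 := by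
    intro y hy
    have hey : ⟪e, y⟫_ℝ = 0 := ((aux_mem_ballIn_iff y).1 hy).2
    rcases hz with h | h
    · rw [h]; exact hey
    · rw [h, inner_neg_left, hey, neg_zero]
  have himg : (fun y => ⟪z, y⟫_ℝ) '' (B : Set (EuclideanSpace ℝ (Fin n))) = {0} := by
    apply Set.Subset.antisymm
    · rintro _ ⟨y, hy, rfl⟩
      exact hver y hy
    · rintro x hx
      rw [Set.mem_singleton_iff] at hx
      exact ⟨0, h0B, by simp [hx]⟩
  have hsupp : supportFn B z = 0 := by rw [supportFn, himg, csSup_singleton]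
  ext x
  simp only [suppSet, Set.mem_setOf_eq, hsupp]
  constructor
  · exact fun h => h.1
  · intro hx
    exact ⟨hx, by rw [real_inner_comm]; exact hver x hx⟩

lemma aux_normalConeFace_vertical (he : ‖e‖ = 1) {z : EuclideanSpace ℝ (Fin n)}
    (hz : z = e ∨ z = -e) :
    normalConeFace (ballIn (Submodule.span ℝ {e})ᗮ)
        (suppSet (ballIn (Submodule.span ℝ {e})ᗮ) z)
      = (Submodule.span ℝ {e} : Set (EuclideanSpace ℝ (Fin n))) := by
  set B := ballIn (Submodule.span ℝ {e})ᗮ with hB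
  rw [aux_suppSet_vertical he hz]
  have hmemB : ∀ x : EuclideanSpace ℝ (Fin n),
      x ∈ (B : Set (EuclideanSpace ℝ (Fin n))) ↔ ‖x‖ ≤ 1 ∧ ⟪e, x⟫_ℝ = 0 :=
    fun x => aux_mem_ballIn_iff x
  have h0B : (0 : EuclideanSpace ℝ (Fin n)) ∈ (B : Set (EuclideanSpace ℝ (Fin n))) := by
    rw [hmemB]; simp
  apply Set.Subset.antisymm
  · -- normal cone face ⊆ span {e}
    intro w hw
    obtain ⟨x₀, hx₀⟩ := Set.Nonempty.intrinsicInterior B.convex ⟨0, h0B⟩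
    have hx₀B : x₀ ∈ (B : Set (EuclideanSpace ℝ (Fin n))) := intrinsicInterior_subset hx₀
    obtain ⟨p, hp, hseg⟩ := aux_exists_openSegment hx₀ h0B
    obtain ⟨a, b, ha, hbp, hab, heq⟩ := hseg
    have hx₀p : x₀ = b • p := by rw [← heq, smul_zero, zero_add]
    have hwx₀ : ∀ y ∈ (B : Set (EuclideanSpace ℝ (Fin n))), ⟪w, y⟫_ℝ ≤ ⟪w, x₀⟫_ℝ :=
      fun y hy => hw x₀ hx₀ y hy
    have hwp : ⟪w, p⟫_ℝ ≤ 0 := by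
      have h1 := hwx₀ p hp
      rw [hx₀p, real_inner_smul_right] at h1
      nlinarith
    have hwx₀0 : ⟪w, x₀⟫_ℝ ≤ 0 := by
      rw [hx₀p, real_inner_smul_right]
      nlinarith
    have hzero : ∀ y ∈ (B : Set (EuclideanSpace ℝ (Fin n))), ⟪w, y⟫_ℝ = 0 := by
      intro y hy
      have h1 : ⟪w, y⟫_ℝ ≤ 0 := le_trans (hwx₀ y hy) hwx₀0
      have hyneg : -y ∈ (B : Set (EuclideanSpace ℝ (Fin n))) := by
        rw [hmemB] at hy ⊢
        rw [norm_neg, inner_neg_right, hy.2, neg_zero]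
        exact ⟨hy.1, rfl⟩
      have h2 : ⟪w, -y⟫_ℝ ≤ 0 := le_trans (hwx₀ _ hyneg) hwx₀0
      rw [inner_neg_right] at h2
      linarith
    -- conclude w ∈ span {e}
    have hee : ⟪e, e⟫_ℝ = 1 := by
      rw [real_inner_self_eq_norm_mul_norm, he, mul_one]
    set w' := w - ⟪e, w⟫_ℝ • e with hw'
    have hew' : ⟪e, w'⟫_ℝ = 0 := by
      rw [hw', inner_sub_right, real_inner_smul_right, hee, mul_one, sub_self]
    have hw'0 : w' = 0 := by
      by_contra hne
      have hy₀B : (‖w'‖⁻¹ : ℝ) • w' ∈ (B : Set (EuclideanSpace ℝ (Fin n))) := by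
        rw [hmemB]
        constructor
        · rw [norm_smul, norm_inv, norm_norm, inv_mul_cancel₀ (norm_ne_zero_iff.2 hne)]
        · rw [real_inner_smul_right, hew', mul_zero]
      have h1 := hzero _ hy₀B
      have key : ⟪w - ⟪e, w⟫_ℝ • e, w'⟫_ℝ = ⟪w, w'⟫_ℝ - ⟪e, w⟫_ℝ * ⟪e, w'⟫_ℝ := by
        rw [inner_sub_left, real_inner_smul_left]
      rw [← hw', hew', mul_zero, sub_zero] at key
      have hww' : ⟪w, w'⟫_ℝ = ⟪w', w'⟫_ℝ := key.symm
      rw [real_inner_smul_right, hww', real_inner_self_eq_norm_mul_norm] at h1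
      have hn0 : ‖w'‖ ≠ 0 := norm_ne_zero_iff.2 hne
      field_simp at h1
      first
      | exact hne h1
      | exact hne (norm_eq_zero.1 h1)
    have : w = ⟪e, w⟫_ℝ • e := by
      have := hw'0
      rw [hw', sub_eq_zero] at this
      exact this
    rw [SetLike.mem_coe]
    exact Submodule.mem_span_singleton.2 ⟨⟪e, w⟫_ℝ, this.symm⟩
  · -- span {e} ⊆ normal cone face
    intro w hw
    rw [SetLike.mem_coe, Submodule.mem_span_singleton] at hw
    obtain ⟨a, rfl⟩ := hw
    intro x hx y hy
    have hxB : x ∈ (B : Set (EuclideanSpace ℝ (Fin n))) := intrinsicInterior_subset hx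
    have h1 : ⟪e, y⟫_ℝ = 0 := ((hmemB y).1 hy).2
    have h2 : ⟪e, x⟫_ℝ = 0 := ((hmemB x).1 hxB).2
    rw [real_inner_smul_left, real_inner_smul_left, h1, h2]

lemma aux_tsset_ball_vertical (he : ‖e‖ = 1) {z : EuclideanSpace ℝ (Fin n)}
    (hz : z = e ∨ z = -e) :
    TSset (ballIn (Submodule.span ℝ {e})ᗮ) z
      = {w : EuclideanSpace ℝ (Fin n) | ⟪e, w⟫_ℝ = 0} := by
  have hC := aux_normalConeFace_vertical he hz
  have hzspan : z ∈ Submodule.span ℝ ({e} : Set (EuclideanSpace ℝ (Fin n))) := by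
    rcases hz with h | h
    · rw [h]; exact Submodule.mem_span_singleton_self e
    · rw [h]; exact neg_mem (Submodule.mem_span_singleton_self e)
  have hint : ∀ p ∈ (Submodule.span ℝ {e} : Set (EuclideanSpace ℝ (Fin n))),
      ∃ q ∈ (Submodule.span ℝ {e} : Set (EuclideanSpace ℝ (Fin n))),
        z ∈ openSegment ℝ p q := by
    intro p hp
    refine ⟨(1 + 1 : ℝ) • z - (1 : ℝ) • p, ?_, aux_smul_mem_openSegment p one_pos⟩
    rw [SetLike.mem_coe] at hp ⊢
    exact sub_mem (Submodule.smul_mem _ _ hzspan) (Submodule.smul_mem _ _ hp)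
  have hII : z ∈ intrinsicInterior ℝ (Submodule.span ℝ {e} : Set (EuclideanSpace ℝ (Fin n))) := by
    apply aux_mem_intrinsicInterior_of_open isOpen_univ ?_ (Set.mem_univ z)
      (subset_affineSpan ℝ _ hzspan)
    intro x hx
    have := affineSpan_subset_span hx.2
    rwa [Submodule.span_eq] at this
  ext w
  constructor
  · rintro ⟨T, hTC, hperp⟩
    have hzT : z ∈ T := intrinsicInterior_subset hTC.2
    have hTeq : T = (Submodule.span ℝ {e} : Set (EuclideanSpace ℝ (Fin n))) := by
      apply aux_isExtreme_eq ?_ hzT hint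
      rw [← hC]
      exact hTC.1
    apply hperp e
    rw [hTeq]
    exact Submodule.mem_span_singleton_self e
  · intro hw
    refine ⟨(Submodule.span ℝ {e} : Set (EuclideanSpace ℝ (Fin n))), ⟨?_, hII⟩, ?_⟩
    · rw [hC]
    · intro v hv
      rw [SetLike.mem_coe, Submodule.mem_span_singleton] at hv
      obtain ⟨a, rfl⟩ := hv
      rw [real_inner_smul_left, hw, mul_zero]


lemma aux_tsset_ball_generic (he : ‖e‖ = 1) {z : EuclideanSpace ℝ (Fin n)}
    (hz : ‖z‖ = 1) (h1 : z ≠ e) (h2 : z ≠ -e) :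
    TSset (ballIn (Submodule.span ℝ {e})ᗮ) z
      = {w : EuclideanSpace ℝ (Fin n) | ⟪z, w⟫_ℝ = 0 ∧ ⟪e, w⟫_ℝ = 0} := by
  set B := ballIn (Submodule.span ℝ {e})ᗮ with hB
  have hee : ⟪e, e⟫_ℝ = 1 := by rw [real_inner_self_eq_norm_mul_norm, he, mul_one]
  obtain ⟨c, hc⟩ : ∃ c : ℝ, c = ⟪e, z⟫_ℝ := ⟨_, rfl⟩
  obtain ⟨z', hz'def⟩ : ∃ z' : EuclideanSpace ℝ (Fin n), z' = z - c • e := ⟨_, rfl⟩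
  have hez' : ⟪e, z'⟫_ℝ = 0 := by
    rw [hz'def, inner_sub_right, real_inner_smul_right, hee, hc]; ring
  have hz'ne : z' ≠ 0 := by
    intro h
    rw [hz'def, sub_eq_zero] at h
    have habs : ‖z‖ = |c| := by rw [h, norm_smul, he, mul_one, Real.norm_eq_abs]
    rw [hz] at habs
    rcases (abs_eq zero_le_one).1 habs.symm with h' | h'
    · exact h1 (by rw [h, h', one_smul])
    · exact h2 (by rw [h, h', neg_smul, one_smul])
  have hnz' : 0 < ‖z'‖ := norm_pos_iff.2 hz'ne
  obtain ⟨u, hu_def⟩ : ∃ u : EuclideanSpace ℝ (Fin n), u = (‖z'‖⁻¹ : ℝ) • z' := ⟨_, rfl⟩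
  have hu : ‖u‖ = 1 := by
    rw [hu_def, norm_smul, norm_inv, norm_norm, inv_mul_cancel₀ hnz'.ne']
  have huu : ⟪u, u⟫_ℝ = 1 := by rw [real_inner_self_eq_norm_mul_norm, hu, mul_one]
  have heu : ⟪e, u⟫_ℝ = 0 := by rw [hu_def, real_inner_smul_right, hez', mul_zero]
  have hue : ⟪u, e⟫_ℝ = 0 := by rw [real_inner_comm]; exact heu
  have hz'u : z' = ‖z'‖ • u := by
    rw [hu_def, smul_smul, mul_inv_cancel₀ hnz'.ne', one_smul]
  have hzdec : z = ‖z'‖ • u + c • e := by rw [← hz'u, hz'def]; abel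
  have huz : ⟪u, z⟫_ℝ = ‖z'‖ := by
    rw [hzdec, inner_add_right, real_inner_smul_right, real_inner_smul_right, huu, hue]; ring
  have hmemB : ∀ x : EuclideanSpace ℝ (Fin n),
      x ∈ (B : Set (EuclideanSpace ℝ (Fin n))) ↔ ‖x‖ ≤ 1 ∧ ⟪e, x⟫_ℝ = 0 :=
    fun x => aux_mem_ballIn_iff x
  have huB : u ∈ (B : Set (EuclideanSpace ℝ (Fin n))) := (hmemB u).2 ⟨le_of_eq hu, heu⟩
  have himgbound : ∀ y ∈ (B : Set (EuclideanSpace ℝ (Fin n))), ⟪z, y⟫_ℝ ≤ ‖z'‖ := by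
    intro y hy
    obtain ⟨hy1, hy2⟩ := (hmemB y).1 hy
    have hzy : ⟪z, y⟫_ℝ = ⟪z', y⟫_ℝ := by
      rw [hz'def, inner_sub_left, real_inner_smul_left, hy2]; ring
    rw [hzy]
    calc ⟪z', y⟫_ℝ ≤ ‖z'‖ * ‖y‖ := real_inner_le_norm _ _
    _ ≤ ‖z'‖ * 1 := by nlinarith
    _ = ‖z'‖ := mul_one _
  have hsupp : supportFn B z = ‖z'‖ := by
    have hbdd : BddAbove ((fun y => ⟪z, y⟫_ℝ) '' (B : Set (EuclideanSpace ℝ (Fin n)))) :=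
      ⟨‖z'‖, by rintro x ⟨y, hy, rfl⟩; exact himgbound y hy⟩
    have hmm : ‖z'‖ ∈ (fun y => ⟪z, y⟫_ℝ) '' (B : Set (EuclideanSpace ℝ (Fin n))) :=
      ⟨u, huB, by rw [real_inner_comm] at huz; exact huz⟩
    rw [supportFn]
    exact le_antisymm (csSup_le ⟨_, hmm⟩ (by rintro x ⟨y, hy, rfl⟩; exact himgbound y hy))
      (le_csSup hbdd hmm)
  have hss : suppSet B z = {u} := by
    ext x
    simp only [suppSet, Set.mem_setOf_eq, Set.mem_singleton_iff, hsupp]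
    constructor
    · rintro ⟨hxB, hxz⟩
      obtain ⟨hx1, hx2⟩ := (hmemB x).1 hxB
      have hzx' : ⟪z', x⟫_ℝ = ‖z'‖ := by
        have hh : ⟪z', x⟫_ℝ = ⟪z, x⟫_ℝ - c * ⟪e, x⟫_ℝ := by
          rw [hz'def, inner_sub_left, real_inner_smul_left]
        rw [hh, hx2, mul_zero, sub_zero, real_inner_comm]
        exact hxz
      have hx1' : ‖x‖ = 1 := by
        by_contra hne
        have hlt : ‖x‖ < 1 := lt_of_le_of_ne hx1 hne
        have := real_inner_le_norm z' x
        nlinarith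
      have heq : ⟪z', x⟫_ℝ = ‖z'‖ * ‖x‖ := by rw [hx1', mul_one]; exact hzx'
      have h5 := inner_eq_norm_mul_iff_real.1 heq
      rw [hx1', one_smul] at h5
      have h6 := congrArg (fun v : EuclideanSpace ℝ (Fin n) => (‖z'‖⁻¹ : ℝ) • v) h5
      rw [smul_smul, inv_mul_cancel₀ hnz'.ne', one_smul] at h6
      have hux : u = x := by rw [hu_def]; exact h6
      exact hux.symm
    · rintro rfl
      exact ⟨huB, huz⟩
  obtain ⟨Cg, hCg_def⟩ : ∃ Cg : Set (EuclideanSpace ℝ (Fin n)),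
      Cg = {w : EuclideanSpace ℝ (Fin n) | ∃ t s : ℝ, 0 ≤ t ∧ w = t • u + s • e} := ⟨_, rfl⟩
  have hinnerCg : ∀ t s : ℝ, ∀ y : EuclideanSpace ℝ (Fin n),
      ⟪t • u + s • e, y⟫_ℝ = t * ⟪u, y⟫_ℝ + s * ⟪e, y⟫_ℝ := fun t s y => by
    rw [inner_add_left, real_inner_smul_left, real_inner_smul_left]
  have hCN : normalConeFace B (suppSet B z) = Cg := by
    rw [hss]
    have hNC : normalConeFace B {u} = normalConeAt B u := by
      ext w
      constructor
      · intro h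
        exact h u (by rw [intrinsicInterior_singleton]; exact Set.mem_singleton u)
      · intro h x hx
        rw [intrinsicInterior_singleton, Set.mem_singleton_iff] at hx
        rw [hx]
        exact h
    rw [hNC]
    ext w
    constructor
    · intro hw
      set w' := w - ⟪e, w⟫_ℝ • e with hw'def
      have hew' : ⟪e, w'⟫_ℝ = 0 := by
        rw [hw'def, inner_sub_right, real_inner_smul_right, hee]; ring
      have hwy : ∀ y : EuclideanSpace ℝ (Fin n), ⟪e, y⟫_ℝ = 0 → ⟪w, y⟫_ℝ = ⟪w', y⟫_ℝ := by
        intro y hy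
        rw [hw'def, inner_sub_left, real_inner_smul_left, hy]; ring
      by_cases hw0 : w' = 0
      · rw [hCg_def]
        refine ⟨0, ⟪e, w⟫_ℝ, le_refl 0, ?_⟩
        rw [zero_smul, zero_add]
        have hww := hw0
        rw [hw'def, sub_eq_zero] at hww
        exact hww
      · have hy₀ : (‖w'‖⁻¹ : ℝ) • w' ∈ (B : Set (EuclideanSpace ℝ (Fin n))) :=
          (hmemB _).2 ⟨by rw [norm_smul, norm_inv, norm_norm,
              inv_mul_cancel₀ (norm_ne_zero_iff.2 hw0)],
            by rw [real_inner_smul_right, hew', mul_zero]⟩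
        have hkey1 : ‖w'‖ ≤ ⟪w, u⟫_ℝ := by
          have h3 := hw _ hy₀
          have h4 : ⟪w, (‖w'‖⁻¹ : ℝ) • w'⟫_ℝ = ‖w'‖ := by
            rw [real_inner_smul_right, hwy w' hew', real_inner_self_eq_norm_mul_norm]
            field_simp
          rwa [h4] at h3
        have hkey2 : ⟪w, u⟫_ℝ ≤ ‖w'‖ := by
          rw [hwy u heu]
          calc ⟪w', u⟫_ℝ ≤ ‖w'‖ * ‖u‖ := real_inner_le_norm _ _
          _ = ‖w'‖ := by rw [hu, mul_one]
        have heq2 : ⟪w', u⟫_ℝ = ‖w'‖ * ‖u‖ := by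
          rw [hu, mul_one, ← hwy u heu]
          exact le_antisymm hkey2 hkey1
        have h5 := inner_eq_norm_mul_iff_real.1 heq2
        rw [hu, one_smul] at h5
        rw [hCg_def]
        refine ⟨‖w'‖, ⟪e, w⟫_ℝ, norm_nonneg _, ?_⟩
        rw [← h5, hw'def]
        abel
    · intro hwCg
      rw [hCg_def] at hwCg
      obtain ⟨t, s, ht, rfl⟩ := hwCg
      intro y hy
      obtain ⟨hy1, hy2⟩ := (hmemB y).1 hy
      rw [hinnerCg, hinnerCg, huu, heu, hy2]
      have huy : ⟪u, y⟫_ℝ ≤ 1 := by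
        calc ⟪u, y⟫_ℝ ≤ ‖u‖ * ‖y‖ := real_inner_le_norm _ _
        _ ≤ 1 := by rw [hu, one_mul]; exact hy1
      nlinarith
  have hzCg : z ∈ Cg := by rw [hCg_def]; exact ⟨‖z'‖, c, norm_nonneg _, hzdec⟩
  have hII : z ∈ intrinsicInterior ℝ Cg := by
    apply aux_mem_intrinsicInterior_of_open
      (O := {x : EuclideanSpace ℝ (Fin n) | 0 < ⟪u, x⟫_ℝ}) ?_ ?_ ?_
      (subset_affineSpan ℝ _ hzCg)
    · exact isOpen_lt continuous_const (Continuous.inner continuous_const continuous_id)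
    · intro x hx
      have hx2 := affineSpan_subset_span hx.2
      have hx3 : x ∈ Submodule.span ℝ ({u, e} : Set (EuclideanSpace ℝ (Fin n))) := by
        refine Submodule.span_le.2 ?_ hx2
        rw [hCg_def]
        rintro y ⟨t, s', hts, rfl⟩
        exact Submodule.add_mem _
          (Submodule.smul_mem _ _ (Submodule.subset_span (Set.mem_insert u {e})))
          (Submodule.smul_mem _ _ (Submodule.subset_span (Set.mem_insert_of_mem _ rfl)))
      obtain ⟨a, b, hab⟩ := Submodule.mem_span_pair.1 hx3
      have hxa : ⟪u, x⟫_ℝ = a := by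
        rw [← hab, inner_add_right, real_inner_smul_right, real_inner_smul_right, huu, hue]; ring
      rw [hCg_def]
      exact ⟨a, b, by rw [← hxa]; exact le_of_lt hx.1, hab.symm⟩
    · show 0 < ⟪u, z⟫_ℝ
      rw [huz]
      exact hnz'
  have hint : ∀ p ∈ Cg, ∃ q ∈ Cg, z ∈ openSegment ℝ p q := by
    intro p hp
    rw [hCg_def] at hp
    obtain ⟨t, s, ht, rfl⟩ := hp
    obtain ⟨D, hD⟩ : ∃ D : ℝ, D = ‖z'‖ + t + 1 := ⟨_, rfl⟩
    have hDpos : 0 < D := by rw [hD]; positivity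
    obtain ⟨ε, hε⟩ : ∃ ε : ℝ, ε = ‖z'‖ / D := ⟨_, rfl⟩
    have hεpos : 0 < ε := by rw [hε]; exact div_pos hnz' hDpos
    have hεD : ε * D = ‖z'‖ := by rw [hε]; exact div_mul_cancel₀ _ hDpos.ne'
    refine ⟨(1 + ε) • z - ε • (t • u + s • e), ?_, aux_smul_mem_openSegment _ hεpos⟩
    rw [hCg_def]
    refine ⟨(1 + ε) * ‖z'‖ - ε * t, (1 + ε) * c - ε * s, ?_, ?_⟩
    · nlinarith [hεD, hnz', ht, hεpos, hDpos, hD]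
    · rw [hzdec]
      module
  ext w
  simp only [Set.mem_setOf_eq]
  constructor
  · rintro ⟨T, hTC, hperp⟩
    have hzT : z ∈ T := intrinsicInterior_subset hTC.2
    have hTeq : T = Cg := by
      apply aux_isExtreme_eq ?_ hzT hint
      rw [← hCN]
      exact hTC.1
    have hu' : ⟪u, w⟫_ℝ = 0 := by
      apply hperp u
      rw [hTeq, hCg_def]
      exact ⟨1, 0, zero_le_one, by rw [one_smul, zero_smul, add_zero]⟩
    have he' : ⟪e, w⟫_ℝ = 0 := by
      apply hperp e
      rw [hTeq, hCg_def]
      exact ⟨0, 1, le_refl 0, by rw [one_smul, zero_smul, zero_add]⟩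
    refine ⟨?_, he'⟩
    rw [hzdec, inner_add_left, real_inner_smul_left, real_inner_smul_left, hu', he']; ring
  · rintro ⟨hzw, hew⟩
    have huw : ⟪u, w⟫_ℝ = 0 := by
      rw [hu_def, real_inner_smul_left, hz'def, inner_sub_left, real_inner_smul_left, hzw, hew]
      ring
    refine ⟨Cg, ⟨?_, hII⟩, ?_⟩
    · rw [hCN]
    · intro v hv
      rw [hCg_def] at hv
      obtain ⟨t, s, ht, rfl⟩ := hv
      rw [hinnerCg, huw, hew]; ring

end TSHelpers

section LinAlgHelpers

set_option linter.unusedSectionVars false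

variable {F : Type*} [NormedAddCommGroup F] [InnerProductSpace ℝ F] [FiniteDimensional ℝ F]

open Module Submodule

lemma aux_build_f2 {X M : Submodule ℝ F} (hXM : X ≤ M) {m : ℕ}
    (hm : Module.finrank ℝ M = Module.finrank ℝ X + m) :
    ∃ f2 : Fin m → F, LinearIndependent ℝ f2 ∧ ∀ i, f2 i ∈ M ⊓ Xᗮ := by
  set U := M ⊓ Xᗮ with hU
  have hXU : X ⊓ U = ⊥ := by
    have h1 : X ⊓ U ≤ X ⊓ Xᗮ := inf_le_inf_left X inf_le_right
    rw [Submodule.inf_orthogonal_eq_bot] at h1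
    exact le_bot_iff.1 h1
  have hsup : X ⊔ U = M := by
    have h2 : (X ⊔ Xᗮ) ⊓ M = X ⊔ Xᗮ ⊓ M := sup_inf_assoc_of_le _ hXM
    have h3 : X ⊔ Xᗮ = ⊤ := Submodule.isCompl_orthogonal_of_hasOrthogonalProjection.sup_eq_top
    rw [h3, top_inf_eq] at h2
    rw [hU, inf_comm]
    exact h2.symm
  have hUrank : Module.finrank ℝ U = m := by
    have h4 := Submodule.finrank_sup_add_finrank_inf_eq X U
    rw [hsup, hXU, finrank_bot, add_zero] at h4
    omega
  let b := Module.finBasis ℝ U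
  refine ⟨fun i => (b (Fin.cast hUrank.symm i) : F), ?_, fun i => (b _).2⟩
  have hli : LinearIndependent ℝ (fun i : Fin (Module.finrank ℝ U) => (b i : F)) :=
    b.linearIndependent.map' U.subtype U.ker_subtype
  exact hli.comp _ (Fin.cast_injective _)

lemma aux_exists_li_subfamily {S : Set F} {j : ℕ} (hj1 : 1 ≤ j)
    (hj : j ≤ Module.finrank ℝ (Submodule.span ℝ S))
    {V : Submodule ℝ F} (hSV : ¬ S ⊆ (V : Set F)) :
    ∃ f1 : Fin j → F, LinearIndependent ℝ f1 ∧ (∀ i, f1 i ∈ S) ∧ ∃ i, f1 i ∉ V := by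
  obtain ⟨b, hbS, hbspan, hbli⟩ := exists_linearIndependent ℝ S
  have hbfin : b.Finite := hbli.setFinite
  haveI := hbfin.fintype
  have hcard : b.toFinset.card = Module.finrank ℝ (Submodule.span ℝ S) := by
    rw [← hbspan]
    exact (finrank_span_set_eq_card hbli).symm
  have hbV : ¬ b ⊆ (V : Set F) := by
    intro h
    apply hSV
    intro x hx
    have hx2 : x ∈ Submodule.span ℝ S := Submodule.subset_span hx
    rw [← hbspan] at hx2
    exact Submodule.span_le.2 h hx2
  obtain ⟨b₀, hb₀b, hb₀V⟩ := Set.not_subset.1 hbV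
  have hb₀F : b₀ ∈ b.toFinset := Set.mem_toFinset.2 hb₀b
  obtain ⟨G, hGsub, hGcard⟩ := Finset.exists_subset_card_eq (s := b.toFinset.erase b₀) (n := j - 1) (by
    rw [Finset.card_erase_of_mem hb₀F, hcard]
    omega)
  have hb₀G : b₀ ∉ G := fun h => (Finset.notMem_erase b₀ _) (hGsub h)
  set Fs := insert b₀ G with hFs
  have hFcard : Fs.card = j := by
    rw [hFs, Finset.card_insert_of_notMem hb₀G, hGcard]
    omega
  have hFsub : (Fs : Set F) ⊆ b := by
    intro x hx
    rcases Finset.mem_insert.1 (Finset.mem_coe.1 hx) with h | h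
    · rw [h]; exact hb₀b
    · exact Set.mem_toFinset.1 (Finset.mem_of_mem_erase (hGsub h))
  have hFli : LinearIndependent ℝ (fun x : (Fs : Set F) => (x : F)) := (show LinearIndepOn ℝ id b from hbli).mono hFsub
  set g : Fin j → (Fs : Set F) := fun i =>
    ⟨(Fs.equivFin.symm (finCongr hFcard.symm i) : F), by
      have := (Fs.equivFin.symm (finCongr hFcard.symm i)).2
      exact Finset.mem_coe.2 this⟩ with hg
  have hginj : Function.Injective g := by
    intro i i' hii
    have h2 : Fs.equivFin.symm (finCongr hFcard.symm i)
        = Fs.equivFin.symm (finCongr hFcard.symm i') := by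
      apply Subtype.ext
      exact congrArg Subtype.val hii
    have h3 := Fs.equivFin.symm.injective h2
    exact (finCongr hFcard.symm).injective h3
  refine ⟨fun i => (g i : F), hFli.comp g hginj, fun i => hbS (hFsub (g i).2), ?_⟩
  refine ⟨finCongr hFcard (Fs.equivFin ⟨b₀, Finset.mem_insert_self _ _⟩), ?_⟩
  have hval : (g (finCongr hFcard (Fs.equivFin ⟨b₀, Finset.mem_insert_self _ _⟩)) : F) = b₀ := by
    rw [hg]
    simp
  show (g _ : F) ∉ V
  rw [hval]
  exact hb₀V

lemma aux_combine_li {k m : ℕ} {f1 : Fin k → F} {f2 : Fin m → F}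
    (h1 : LinearIndependent ℝ f1) (h2 : LinearIndependent ℝ f2)
    (hd : Disjoint (Submodule.span ℝ (Set.range f1)) (Submodule.span ℝ (Set.range f2)))
    {N : ℕ} (hN : N = k + m) :
    ∃ w : Fin N → F, LinearIndependent ℝ w ∧
      ∀ i : Fin N, ((i : ℕ) < k → w i ∈ Set.range f1) ∧ (k ≤ (i : ℕ) → w i ∈ Set.range f2) := by
  subst hN
  set g : Fin (k + m) → Fin k ⊕ Fin m := fun i =>
    if h : (i : ℕ) < k then Sum.inl ⟨i, h⟩
    else Sum.inr ⟨(i : ℕ) - k, by have := i.isLt; omega⟩ with hgdef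
  have hginj : Function.Injective g := by
    intro a b hab
    apply Fin.ext
    by_cases ha : (a : ℕ) < k <;> by_cases hb : (b : ℕ) < k <;>
      simp only [hgdef, ha, hb, dif_pos, dif_neg, not_false_iff, Sum.inl.injEq,
        Sum.inr.injEq, Fin.mk.injEq, reduceCtorEq] at hab <;>
      omega
  refine ⟨Sum.elim f1 f2 ∘ g, (h1.sum_type h2 hd).comp g hginj, fun i => ⟨?_, ?_⟩⟩
  · intro hik
    have : g i = Sum.inl ⟨i, hik⟩ := by rw [hgdef]; exact dif_pos hik
    show (Sum.elim f1 f2 ∘ g) i ∈ Set.range f1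
    rw [Function.comp_apply, this]
    exact Set.mem_range_self _
  · intro hik
    have hik' : ¬ (i : ℕ) < k := by omega
    have : g i = Sum.inr ⟨(i : ℕ) - k, by have := i.isLt; omega⟩ := by
      rw [hgdef]; exact dif_neg hik'
    show (Sum.elim f1 f2 ∘ g) i ∈ Set.range f2
    rw [Function.comp_apply, this]
    exact Set.mem_range_self _

lemma aux_normalize {N : ℕ} {w : Fin N → F} (hli : LinearIndependent ℝ w) :
    LinearIndependent ℝ (fun i => (‖w i‖⁻¹ : ℝ) • w i)
      ∧ ∀ i, ‖(‖w i‖⁻¹ : ℝ) • w i‖ = 1 := by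
  have hne : ∀ i, w i ≠ 0 := fun i => hli.ne_zero i
  constructor
  · exact hli.units_smul fun i => Units.mk0 (‖w i‖⁻¹) (inv_ne_zero (norm_ne_zero_iff.2 (hne i)))
  · intro i
    rw [norm_smul, norm_inv, norm_norm, inv_mul_cancel₀ (norm_ne_zero_iff.2 (hne i))]

lemma aux_card_le_finrank {N : ℕ} {w : Fin N → F} (hli : LinearIndependent ℝ w)
    {M : Submodule ℝ F} (hmem : ∀ i, w i ∈ M) : N ≤ Module.finrank ℝ M := by
  have h1 : Module.finrank ℝ (Submodule.span ℝ (Set.range w)) = N := by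
    rw [finrank_span_eq_card hli, Fintype.card_fin]
  rw [← h1]
  exact Submodule.finrank_mono (Submodule.span_le.2 (Set.range_subset_iff.2 hmem))

end LinAlgHelpers


/-- characterization of `(K[j], B_L^{n−1}[n−1−j])`-extreme unit normal vectors,
for `1 ≤ j ≤ n−2`: for `z ∉ {±eₙ}` extremality is equivalent to `dim TS(K,z) ≥ j` and
`TS(K,z) ⊄ L`; for `z ∈ {±eₙ}` it is equivalent to `dim TS(K,z) ≥ j`. -/
theorem extreme_iff_dimTS {n j : ℕ} (hn : 2 ≤ n) (hj : 1 ≤ j) (hjn : j ≤ n - 2)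
    (K : ConvexBody (EuclideanSpace ℝ (Fin n)))
    (z : EuclideanSpace ℝ (Fin n)) (hz : ‖z‖ = 1) :
    (z ≠ lastVec n (by omega) ∧ z ≠ -lastVec n (by omega) →
      (IsExtremeNormal
          (fun i : Fin (n - 1) => if (i : ℕ) < j then K
            else ballIn (Submodule.span ℝ {lastVec n (by omega)})ᗮ) z
        ↔ (j ≤ dimTS K z ∧
            ¬ TSset K z ⊆
              ((Submodule.span ℝ {lastVec n (by omega)})ᗮ : Set (EuclideanSpace ℝ (Fin n)))))) ∧
    (z = lastVec n (by omega) ∨ z = -lastVec n (by omega) →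
      (IsExtremeNormal
          (fun i : Fin (n - 1) => if (i : ℕ) < j then K
            else ballIn (Submodule.span ℝ {lastVec n (by omega)})ᗮ) z
        ↔ j ≤ dimTS K z)) := by
  have hn1 : 1 ≤ n := by omega
  set e := lastVec n hn1 with hedef
  have he : ‖e‖ = 1 := by
    rw [hedef, lastVec, EuclideanSpace.norm_single, norm_one]
  have hefin : Module.finrank ℝ (EuclideanSpace ℝ (Fin n)) = n := finrank_euclideanSpace_fin
  have hene : e ≠ 0 := by intro h; rw [h, norm_zero] at he; norm_num at he
  have hzne : z ≠ 0 := by intro h; rw [h, norm_zero] at hz; norm_num at hz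
  set Z := (Submodule.span ℝ ({z} : Set (EuclideanSpace ℝ (Fin n))))ᗮ with hZdef
  set Lsub := (Submodule.span ℝ ({e} : Set (EuclideanSpace ℝ (Fin n))))ᗮ with hLdef
  have hZrank : Module.finrank ℝ Z = n - 1 := by
    have h1 := Submodule.finrank_add_finrank_orthogonal
      (K := Submodule.span ℝ ({z} : Set (EuclideanSpace ℝ (Fin n))))
    rw [finrank_span_singleton hzne, hefin] at h1
    rw [← hZdef] at h1
    omega
  have hLrank : Module.finrank ℝ Lsub = n - 1 := by
    have h1 := Submodule.finrank_add_finrank_orthogonal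
      (K := Submodule.span ℝ ({e} : Set (EuclideanSpace ℝ (Fin n))))
    rw [finrank_span_singleton hene, hefin] at h1
    rw [← hLdef] at h1
    omega
  have hTSZ : TSset K z ⊆ (Z : Set (EuclideanSpace ℝ (Fin n))) := fun w hw =>
    Submodule.mem_orthogonal_singleton_iff_inner_right.2 (aux_tsset_inner hw)
  -- shared forward direction
  have hfwd : IsExtremeNormal
      (fun i : Fin (n - 1) => if (i : ℕ) < j then K else ballIn Lsub) z →
      j ≤ Module.finrank ℝ (Submodule.span ℝ (TSset K z)) := by
    rintro ⟨w, hw, hli⟩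
    have hjn1 : j ≤ n - 1 := by omega
    have hvli : LinearIndependent ℝ (fun i : Fin j => w (Fin.castLE hjn1 i)) :=
      hli.comp _ (Fin.castLE_injective hjn1)
    have hvmem : ∀ i : Fin j, w (Fin.castLE hjn1 i) ∈ TSset K z := by
      intro i
      have h4 := (hw (Fin.castLE hjn1 i)).2
      simp only [Fin.coe_castLE] at h4
      rwa [if_pos i.isLt] at h4
    have h5 : Module.finrank ℝ (Submodule.span ℝ
        (Set.range (fun i : Fin j => w (Fin.castLE hjn1 i)))) = j := by
      rw [finrank_span_eq_card hvli, Fintype.card_fin]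
    rw [← h5]
    exact Submodule.finrank_mono (Submodule.span_mono (Set.range_subset_iff.2 hvmem))
  constructor
  · rintro ⟨hz1, hz2⟩
    have hz1' : z ≠ e := hz1
    have hz2' : z ≠ -e := hz2
    have hTB : TSset (ballIn Lsub) z
        = {w : EuclideanSpace ℝ (Fin n) | ⟪z, w⟫_ℝ = 0 ∧ ⟪e, w⟫_ℝ = 0} :=
      aux_tsset_ball_generic he hz hz1' hz2'
    set M := Z ⊓ Lsub with hMdef
    have hMzw : ∀ x : EuclideanSpace ℝ (Fin n),
        x ∈ M ↔ (⟪z, x⟫_ℝ = 0 ∧ ⟪e, x⟫_ℝ = 0) := by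
      intro x
      rw [hMdef, Submodule.mem_inf]
      exact and_congr Submodule.mem_orthogonal_singleton_iff_inner_right
        Submodule.mem_orthogonal_singleton_iff_inner_right
    have hznotspan : z ∉ Submodule.span ℝ ({e} : Set (EuclideanSpace ℝ (Fin n))) := by
      intro hmem
      obtain ⟨t, ht⟩ := Submodule.mem_span_singleton.1 hmem
      have habs : ‖z‖ = |t| := by rw [← ht, norm_smul, he, mul_one, Real.norm_eq_abs]
      rw [hz] at habs
      rcases (abs_eq zero_le_one).1 habs.symm with h' | h'
      · exact hz1' (by rw [← ht, h', one_smul])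
      · exact hz2' (by rw [← ht, h', neg_smul, one_smul])
    have hMrank : Module.finrank ℝ M = n - 2 := by
      have hinf : Submodule.span ℝ ({z} : Set (EuclideanSpace ℝ (Fin n)))
          ⊓ Submodule.span ℝ {e} = ⊥ := by
        rw [eq_bot_iff]
        rintro x ⟨hx1, hx2⟩
        obtain ⟨a, ha⟩ := Submodule.mem_span_singleton.1 hx1
        rcases eq_or_ne a 0 with rfl | hane
        · rw [← ha, zero_smul]
          exact Submodule.zero_mem ⊥
        · exfalso
          apply hznotspan
          have hza : z = a⁻¹ • x := by rw [← ha, smul_smul, inv_mul_cancel₀ hane, one_smul]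
          rw [hza]
          exact Submodule.smul_mem _ _ hx2
      have hsup2 := Submodule.finrank_sup_add_finrank_inf_eq
        (Submodule.span ℝ ({z} : Set (EuclideanSpace ℝ (Fin n)))) (Submodule.span ℝ {e})
      rw [hinf, finrank_bot, add_zero, finrank_span_singleton hzne,
        finrank_span_singleton hene] at hsup2
      have hMorth : M = (Submodule.span ℝ ({z} : Set (EuclideanSpace ℝ (Fin n)))
          ⊔ Submodule.span ℝ {e})ᗮ := by
        rw [hMdef, hZdef, hLdef]
        exact Submodule.inf_orthogonal _ _
      have h3 := Submodule.finrank_add_finrank_orthogonal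
        (K := Submodule.span ℝ ({z} : Set (EuclideanSpace ℝ (Fin n))) ⊔ Submodule.span ℝ {e})
      rw [hsup2, hefin] at h3
      rw [hMorth]
      omega
    constructor
    · intro hext
      refine ⟨hfwd hext, ?_⟩
      obtain ⟨w, hw, hli⟩ := hext
      intro hsub
      have hmemM : ∀ i, w i ∈ M := by
        intro i
        rw [hMzw]
        by_cases hij : (i : ℕ) < j
        · have h4 : w i ∈ TSset (if (i : ℕ) < j then K else ballIn Lsub) z := (hw i).2
          rw [if_pos hij] at h4
          refine ⟨aux_tsset_inner h4, ?_⟩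
          have h5 := hsub h4
          exact Submodule.mem_orthogonal_singleton_iff_inner_right.1 h5
        · have h4 : w i ∈ TSset (if (i : ℕ) < j then K else ballIn Lsub) z := (hw i).2
          rw [if_neg hij] at h4
          have h4' : (⟪z, w i⟫_ℝ = 0 ∧ ⟪e, w i⟫_ℝ = 0) := by
            rw [← Set.mem_setOf_eq (p := fun w : EuclideanSpace ℝ (Fin n) =>
              ⟪z, w⟫_ℝ = 0 ∧ ⟪e, w⟫_ℝ = 0), ← hTB]
            exact h4
          exact h4'
      have h9 := aux_card_le_finrank hli hmemM
      rw [hMrank] at h9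
      omega
    · rintro ⟨hdim, hnsub⟩
      have hdim' : j ≤ Module.finrank ℝ (Submodule.span ℝ (TSset K z)) := hdim
      have hnsub' : ¬ TSset K z ⊆ (Lsub : Set (EuclideanSpace ℝ (Fin n))) := hnsub
      obtain ⟨f1, hf1li, hf1mem, i₀, hi₀⟩ := aux_exists_li_subfamily hj hdim' hnsub'
      set W := Submodule.span ℝ (Set.range f1) with hWdef
      have hWrank : Module.finrank ℝ W = j := by
        rw [hWdef, finrank_span_eq_card hf1li, Fintype.card_fin]
      have hWZ : W ≤ Z := Submodule.span_le.2 (Set.range_subset_iff.2 fun i => hTSZ (hf1mem i))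
      have hb₀W : f1 i₀ ∈ W := Submodule.subset_span (Set.mem_range_self i₀)
      have hb₀M : f1 i₀ ∉ M := fun h => hi₀ ((inf_le_right : M ≤ Lsub) h)
      set X := W ⊓ M with hXdef
      have hXW : X ≤ W := inf_le_left
      have hXlt : Module.finrank ℝ X < j := by
        rw [← hWrank]
        apply Submodule.finrank_lt_finrank_of_lt
        apply lt_of_le_of_ne hXW
        intro hXeq
        apply hb₀M
        rw [← hXeq] at hb₀W
        exact (inf_le_right : X ≤ M) hb₀W
      have hXge : j - 1 ≤ Module.finrank ℝ X := by
        have h6 := Submodule.finrank_sup_add_finrank_inf_eq W M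
        have h7 : Module.finrank ℝ ↥(W ⊔ M) ≤ n - 1 := by
          rw [← hZrank]
          exact Submodule.finrank_mono (sup_le hWZ inf_le_left)
        rw [hWrank, hMrank, ← hXdef] at h6
        omega
      have hm2 : Module.finrank ℝ M = Module.finrank ℝ X + (n - 1 - j) := by
        rw [hMrank]
        omega
      obtain ⟨f2, hf2li, hf2mem⟩ := aux_build_f2 (inf_le_right : X ≤ M) hm2
      have hdisj : Disjoint (Submodule.span ℝ (Set.range f1))
          (Submodule.span ℝ (Set.range f2)) := by
        have hf2U : Submodule.span ℝ (Set.range f2) ≤ M ⊓ Xᗮ :=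
          Submodule.span_le.2 (Set.range_subset_iff.2 hf2mem)
        have hWU : W ⊓ (M ⊓ Xᗮ) = ⊥ := by
          rw [← inf_assoc, ← hXdef, Submodule.inf_orthogonal_eq_bot]
        rw [disjoint_iff, ← le_bot_iff, ← hWU, ← hWdef]
        exact inf_le_inf_left _ hf2U
      obtain ⟨w0, hw0li, hw0mem⟩ := aux_combine_li hf1li hf2li hdisj
        (show n - 1 = j + (n - 1 - j) by omega)
      obtain ⟨hnli, hnorm⟩ := aux_normalize hw0li
      refine ⟨fun i => (‖w0 i‖⁻¹ : ℝ) • w0 i, fun i => ⟨hnorm i, ?_⟩, hnli⟩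
      show (‖w0 i‖⁻¹ : ℝ) • w0 i
        ∈ TSset (if (i : ℕ) < j then K else ballIn Lsub) z
      by_cases hij : (i : ℕ) < j
      · rw [if_pos hij]
        obtain ⟨i', hi'⟩ := (hw0mem i).1 hij
        exact aux_tsset_smul _ (hi' ▸ hf1mem i')
      · rw [if_neg hij]
        obtain ⟨i', hi'⟩ := (hw0mem i).2 (by omega)
        have hmem2 : w0 i ∈ M := by
          rw [← hi']
          exact (inf_le_left : M ⊓ Xᗮ ≤ M) (hf2mem i')
        have h8 := (hMzw _).1 hmem2
        exact (Set.ext_iff.1 hTB _).2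
          ⟨by rw [real_inner_smul_right, h8.1, mul_zero],
           by rw [real_inner_smul_right, h8.2, mul_zero]⟩
  · intro hzpm
    have hzpm' : z = e ∨ z = -e := hzpm
    have hTB : TSset (ballIn Lsub) z = {w : EuclideanSpace ℝ (Fin n) | ⟪e, w⟫_ℝ = 0} :=
      aux_tsset_ball_vertical he hzpm'
    have hZL : Z = Lsub := by
      rw [hZdef, hLdef]
      have hspan : Submodule.span ℝ ({z} : Set (EuclideanSpace ℝ (Fin n)))
          = Submodule.span ℝ {e} := by
        rcases hzpm' with h | h
        · rw [h]
        · rw [h]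
          apply le_antisymm
          · rw [Submodule.span_le, Set.singleton_subset_iff]
            exact Submodule.neg_mem _ (Submodule.mem_span_singleton_self e)
          · rw [Submodule.span_le, Set.singleton_subset_iff]
            have h9 := Submodule.neg_mem (Submodule.span ℝ {-e}) (Submodule.mem_span_singleton_self (-e))
            rw [neg_neg] at h9
            exact h9
      rw [hspan]
    constructor
    · exact fun hext => hfwd hext
    · intro hdim
      have hdim' : j ≤ Module.finrank ℝ (Submodule.span ℝ (TSset K z)) := hdim
      have hbot : ¬ TSset K z
          ⊆ ((⊥ : Submodule ℝ (EuclideanSpace ℝ (Fin n))) : Set (EuclideanSpace ℝ (Fin n))) := by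
        intro h
        have h1 : Submodule.span ℝ (TSset K z) ≤ ⊥ := Submodule.span_le.2 h
        have h2 : Module.finrank ℝ (Submodule.span ℝ (TSset K z)) = 0 := by
          rw [le_bot_iff.1 h1, finrank_bot]
        omega
      obtain ⟨f1, hf1li, hf1mem, -, -⟩ := aux_exists_li_subfamily hj hdim' hbot
      set W := Submodule.span ℝ (Set.range f1) with hWdef
      have hWrank : Module.finrank ℝ W = j := by
        rw [hWdef, finrank_span_eq_card hf1li, Fintype.card_fin]
      have hWL : W ≤ Lsub := by
        rw [← hZL]
        exact Submodule.span_le.2 (Set.range_subset_iff.2 fun i => hTSZ (hf1mem i))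
      have hm2 : Module.finrank ℝ Lsub = Module.finrank ℝ W + (n - 1 - j) := by
        rw [hLrank, hWrank]
        omega
      obtain ⟨f2, hf2li, hf2mem⟩ := aux_build_f2 hWL hm2
      have hdisj : Disjoint (Submodule.span ℝ (Set.range f1))
          (Submodule.span ℝ (Set.range f2)) := by
        have hf2U : Submodule.span ℝ (Set.range f2) ≤ Lsub ⊓ Wᗮ :=
          Submodule.span_le.2 (Set.range_subset_iff.2 hf2mem)
        rw [← hWdef]
        exact (Submodule.orthogonal_disjoint W).mono_right (le_trans hf2U inf_le_right)
      obtain ⟨w0, hw0li, hw0mem⟩ := aux_combine_li hf1li hf2li hdisj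
        (show n - 1 = j + (n - 1 - j) by omega)
      obtain ⟨hnli, hnorm⟩ := aux_normalize hw0li
      refine ⟨fun i => (‖w0 i‖⁻¹ : ℝ) • w0 i, fun i => ⟨hnorm i, ?_⟩, hnli⟩
      show (‖w0 i‖⁻¹ : ℝ) • w0 i
        ∈ TSset (if (i : ℕ) < j then K else ballIn Lsub) z
      by_cases hij : (i : ℕ) < j
      · rw [if_pos hij]
        obtain ⟨i', hi'⟩ := (hw0mem i).1 hij
        exact aux_tsset_smul _ (hi' ▸ hf1mem i')
      · rw [if_neg hij]
        obtain ⟨i', hi'⟩ := (hw0mem i).2 (by omega)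
        have hmem2 : w0 i ∈ Lsub := by
          rw [← hi']
          exact (inf_le_left : Lsub ⊓ Wᗮ ≤ Lsub) (hf2mem i')
        have h8 : ⟪e, w0 i⟫_ℝ = 0 :=
          Submodule.mem_orthogonal_singleton_iff_inner_right.1 hmem2
        exact (Set.ext_iff.1 hTB _).2 (by rw [Set.mem_setOf_eq, real_inner_smul_right, h8, mul_zero])


end
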